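/- arXiv:1612.06067 — 3 statements merged into one kernel-verified Lean document; each statement's English description precedes it below -/
import Mathlib

section
/- Fix vectors $\beta_1,\dots,\beta_k \in \mathbb{R}^d$ and a partition $S_1,\dots,S_k$ of $\{1,\dots,m\}$ with $n_p = |S_p|$, and measurements $(a_i, b_i)$ with $a_i^\top \beta_p = b_i$ for $i \in S_p$. Let $\ell_i$ denote the class of index $i$, and let $z_i^\sharp = \beta_{\ell_i}$. Suppose that for each $p$ and each $i,j \in S_p$ with $i \neq j$ there exist $\xi_{ij} \in \mathbb{R}^d$ with $\|\xi_{ij}\|_2 < 1$, $\xi_{ij} = -\xi_{ji}$, and scalars $\nu_i \in \mathbb{R}$ such that $\nu_i a_i = \sum_{j \in S_p, j \neq i} \xi_{ij} + \sum_{q \neq p} n_q v_{pq}$, where $v_{pq} = (\beta_p - \beta_q)/\|\beta_p - \beta_q\|_2$. Suppose further that for each $p$, $\mathrm{span}\{a_i : i \in S_p\} = \mathbb{R}^d$. Then $(z_1^\sharp,\dots,z_m^\sharp)$ is the unique minimizer of $f(z_1,\dots,z_m) = \sum_{i=1}^m \sum_{j=1}^m \|z_i - z_j\|_2$ subject to $a_i^\top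 z_i = b_i$ for all $i$. -/
open scoped InnerProductSpace
open Finset

theorem stmt_3 {d k m : ℕ}
    (β : Fin k → EuclideanSpace ℝ (Fin d)) (hβ : Function.Injective β)
    (ℓ : Fin m → Fin k)
    (n : Fin k → ℕ) (hn : ∀ p, n p = (Finset.univ.filter fun i => ℓ i = p).card)
    (a : Fin m → EuclideanSpace ℝ (Fin d)) (b : Fin m → ℝ)
    (hb : ∀ i, b i = ⟪a i, β (ℓ i)⟫_ℝ)
    (ξ : Fin m → Fin m → EuclideanSpace ℝ (Fin d)) (ν : Fin m → ℝ)
    (hnorm : ∀ i j, ℓ i = ℓ j → i ≠ j → ‖ξ i j‖ < 1)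
    (hanti : ∀ i j, ℓ i = ℓ j → i ≠ j → ξ i j = -ξ j i)
    (hstat : ∀ i, ν i • a i =
      (∑ j ∈ (Finset.univ.filter fun j => ℓ j = ℓ i).erase i, ξ i j) +
        ∑ q ∈ Finset.univ.erase (ℓ i),
          (n q : ℝ) • (‖β (ℓ i) - β q‖⁻¹ • (β (ℓ i) - β q)))
    (hspan : ∀ p : Fin k,
      Submodule.span ℝ {x | ∃ i, ℓ i = p ∧ a i = x} = ⊤) :
    ∀ z : Fin m → EuclideanSpace ℝ (Fin d),
      (∀ i, ⟪a i, z i⟫_ℝ = b i) → z ≠ (fun i => β (ℓ i)) →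
        ∑ i : Fin m, ∑ j : Fin m, ‖β (ℓ i) - β (ℓ j)‖ <
          ∑ i : Fin m, ∑ j : Fin m, ‖z i - z j‖ := by
  intro z hz hne
  set h : Fin m → EuclideanSpace ℝ (Fin d) := fun i => z i - β (ℓ i) with hhdef
  have hortho : ∀ i, ⟪a i, h i⟫_ℝ = 0 := by
    intro i
    have h1 := hz i
    rw [hb i] at h1
    simp [hhdef, inner_sub_right, h1]
  set g : Fin m → Fin m → EuclideanSpace ℝ (Fin d) := fun i j =>
    if ℓ j = ℓ i then ξ i j else ‖β (ℓ i) - β (ℓ j)‖⁻¹ • (β (ℓ i) - β (ℓ j)) with hgdef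
  -- pairwise subgradient inequality
  have key : ∀ i j : Fin m, ‖β (ℓ i) - β (ℓ j)‖ + ⟪g i j, h i - h j⟫_ℝ ≤ ‖z i - z j‖ := by
    intro i j
    have hzz : z i - z j = (β (ℓ i) - β (ℓ j)) + (h i - h j) := by
      simp [hhdef]; abel
    by_cases hc : ℓ j = ℓ i
    · have hβ0 : β (ℓ i) - β (ℓ j) = 0 := by rw [hc]; simp
      rw [hβ0] at hzz ⊢
      rw [zero_add] at hzz
      simp only [norm_zero, zero_add, hgdef, if_pos hc, hzz]
      by_cases hij : i = j
      · subst hij; simp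
      · calc ⟪ξ i j, h i - h j⟫_ℝ ≤ ‖ξ i j‖ * ‖h i - h j‖ := real_inner_le_norm _ _
          _ ≤ 1 * ‖h i - h j‖ := by
              apply mul_le_mul_of_nonneg_right (le_of_lt (hnorm i j hc.symm hij)) (norm_nonneg _)
          _ = ‖h i - h j‖ := one_mul _
    · set u := β (ℓ i) - β (ℓ j) with hu
      have hune : u ≠ 0 := by
        rw [hu, sub_ne_zero]
        exact fun he => hc (hβ he).symm
      have hgij : g i j = ‖u‖⁻¹ • u := by simp [hgdef, if_neg hc, hu]
      have hnu : ‖u‖ ≠ 0 := norm_ne_zero_iff.mpr hune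
      have hnorm1 : ‖g i j‖ = 1 := by
        rw [hgij, norm_smul, norm_inv, norm_norm, inv_mul_cancel₀ hnu]
      have h2 : ⟪g i j, z i - z j⟫_ℝ ≤ ‖z i - z j‖ := by
        calc ⟪g i j, z i - z j⟫_ℝ ≤ ‖g i j‖ * ‖z i - z j‖ := real_inner_le_norm _ _
          _ = ‖z i - z j‖ := by rw [hnorm1, one_mul]
      have h3 : ⟪g i j, z i - z j⟫_ℝ = ‖u‖ + ⟪g i j, h i - h j⟫_ℝ := by
        rw [hzz, inner_add_right, hgij, real_inner_smul_left, real_inner_self_eq_norm_sq]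
        congr 1
        field_simp
      linarith [h2, h3]
  -- strict version
  have keystrict : ∀ i j : Fin m, i ≠ j → ℓ i = ℓ j → h i ≠ h j →
      ‖β (ℓ i) - β (ℓ j)‖ + ⟪g i j, h i - h j⟫_ℝ < ‖z i - z j‖ := by
    intro i j hij hc hhne
    have hβ0 : β (ℓ i) - β (ℓ j) = 0 := by rw [hc]; simp
    have hzz : z i - z j = h i - h j := by
      simp only [hhdef, hc]
      abel
    have hw : h i - h j ≠ 0 := sub_ne_zero.mpr hhne
    have hwpos : 0 < ‖h i - h j‖ := norm_pos_iff.mpr hw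
    rw [hβ0, norm_zero, zero_add, hzz]
    simp only [hgdef, if_pos hc.symm]
    calc ⟪ξ i j, h i - h j⟫_ℝ ≤ ‖ξ i j‖ * ‖h i - h j‖ := real_inner_le_norm _ _
      _ < 1 * ‖h i - h j‖ := by
          exact mul_lt_mul_of_pos_right (hnorm i j hc hij) hwpos
      _ = ‖h i - h j‖ := one_mul _
  -- antisymmetry of g
  have hganti : ∀ i j : Fin m, i ≠ j → g j i = -g i j := by
    intro i j hij
    by_cases hc : ℓ j = ℓ i
    · simp only [hgdef, if_pos hc, if_pos hc.symm]
      rw [hanti j i hc hij.symm]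
    · have hc' : ¬ (ℓ i = ℓ j) := fun he => hc he.symm
      simp only [hgdef, if_neg hc, if_neg hc']
      rw [norm_sub_rev (β (ℓ j)), ← neg_sub (β (ℓ i)) (β (ℓ j)), smul_neg]
  -- row sums
  have hrow : ∀ i : Fin m, ∑ j ∈ univ.erase i, g i j = ν i • a i := by
    intro i
    rw [hstat i]
    rw [← Finset.sum_filter_add_sum_filter_not (univ.erase i) (fun j => ℓ j = ℓ i)]
    congr 1
    · rw [Finset.filter_erase]
      apply Finset.sum_congr rfl
      intro j hj
      have hc : ℓ j = ℓ i := (Finset.mem_filter.mp (Finset.mem_of_mem_erase hj)).2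
      simp [hgdef, hc]
    · have hset : (univ.erase i).filter (fun j => ¬ ℓ j = ℓ i) =
          univ.filter (fun j => ¬ ℓ j = ℓ i) := by
        ext j
        simp only [Finset.mem_filter, Finset.mem_erase, Finset.mem_univ, true_and, and_true]
        constructor
        · rintro ⟨_, hl⟩; exact hl
        · intro hl; exact ⟨fun he => hl (he ▸ rfl), hl⟩
      rw [hset]
      rw [← Finset.sum_fiberwise_of_maps_to (g := ℓ)
        (t := univ.erase (ℓ i)) (fun j hj => by
          simp only [Finset.mem_filter] at hj
          exact Finset.mem_erase.mpr ⟨hj.2, Finset.mem_univ _⟩)]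
      apply Finset.sum_congr rfl
      intro q hq
      have hqne : q ≠ ℓ i := (Finset.mem_erase.mp hq).1
      have hset2 : (univ.filter (fun j => ¬ ℓ j = ℓ i)).filter (fun j => ℓ j = q) =
          univ.filter (fun j => ℓ j = q) := by
        ext j
        simp only [Finset.mem_filter, Finset.mem_univ, true_and]
        constructor
        · rintro ⟨_, hl⟩; exact hl
        · intro hl; exact ⟨fun he => hqne (hl.symm.trans he), hl⟩
      rw [hset2]
      have hconst : ∀ j ∈ univ.filter (fun j => ℓ j = q), g i j =
          ‖β (ℓ i) - β q‖⁻¹ • (β (ℓ i) - β q) := by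
        intro j hj
        have hjq : ℓ j = q := (Finset.mem_filter.mp hj).2
        have hne' : ¬ ℓ j = ℓ i := by rw [hjq]; exact hqne
        have hgij : g i j = ‖β (ℓ i) - β (ℓ j)‖⁻¹ • (β (ℓ i) - β (ℓ j)) := by
          simp [hgdef, hne']
        rw [hgij, hjq]
      rw [Finset.sum_congr rfl hconst, Finset.sum_const, hn q]
      exact (Nat.cast_smul_eq_nsmul ℝ _ _).symm
  -- the correction sum is zero
  have hzero : ∑ i : Fin m, ∑ j : Fin m, ⟪g i j, h i - h j⟫_ℝ = 0 := by
    have e1 : ∀ i j : Fin m, ⟪g i j, h i - h j⟫_ℝ = ⟪g i j, h i⟫_ℝ - ⟪g i j, h j⟫_ℝ := by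
      intro i j; rw [inner_sub_right]
    simp only [e1, Finset.sum_sub_distrib]
    have e2 : ∑ i : Fin m, ∑ j : Fin m, ⟪g i j, h j⟫_ℝ
        = ∑ i : Fin m, ∑ j : Fin m, ⟪g j i, h i⟫_ℝ := Finset.sum_comm
    rw [e2, ← Finset.sum_sub_distrib]
    have e3 : ∀ i : Fin m, (∑ j : Fin m, ⟪g i j, h i⟫_ℝ) - (∑ j : Fin m, ⟪g j i, h i⟫_ℝ)
        = 2 * (ν i * ⟪a i, h i⟫_ℝ) := by
      intro i
      rw [← Finset.sum_sub_distrib]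
      have e4 : ∀ j : Fin m, ⟪g i j, h i⟫_ℝ - ⟪g j i, h i⟫_ℝ = ⟪g i j - g j i, h i⟫_ℝ := by
        intro j; rw [inner_sub_left]
      simp only [e4]
      have e5 : ∑ j : Fin m, ⟪g i j - g j i, h i⟫_ℝ
          = ∑ j ∈ univ.erase i, ⟪g i j - g j i, h i⟫_ℝ := by
        symm
        apply Finset.sum_erase
        simp
      rw [e5]
      have e6 : ∀ j ∈ univ.erase i, ⟪g i j - g j i, h i⟫_ℝ = ⟪(2:ℝ) • g i j, h i⟫_ℝ := by
        intro j hj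
        have hji : i ≠ j := fun he => (Finset.mem_erase.mp hj).1 he.symm
        rw [hganti i j hji, sub_neg_eq_add, two_smul]
      rw [Finset.sum_congr rfl e6]
      simp only [real_inner_smul_left]
      rw [← Finset.mul_sum, ← sum_inner, hrow i, real_inner_smul_left]
    rw [Finset.sum_congr rfl (fun i _ => e3 i)]
    simp [hortho]
  -- exhibit a strict pair
  have hexists : ∃ i0 j0 : Fin m, i0 ≠ j0 ∧ ℓ i0 = ℓ j0 ∧ h i0 ≠ h j0 := by
    by_contra hcon
    push_neg at hcon
    apply hne
    funext i
    have hcon' : ∀ j : Fin m, ℓ j = ℓ i → h j = h i := by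
      intro j hj
      by_cases hji : j = i
      · rw [hji]
      · exact hcon j i hji hj
    have hbot : h i = 0 := by
      have hall : ∀ y : EuclideanSpace ℝ (Fin d), ⟪y, h i⟫_ℝ = 0 := by
        intro y
        have hy : y ∈ Submodule.span ℝ {x | ∃ j, ℓ j = ℓ i ∧ a j = x} := by
          rw [hspan (ℓ i)]; trivial
        induction hy using Submodule.span_induction with
        | mem x hx =>
            obtain ⟨j, hj, rfl⟩ := hx
            rw [← hcon' j hj]
            exact hortho j
        | zero => simp
        | add x y _ _ hx hy => rw [inner_add_left, hx, hy, add_zero]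
        | smul c x _ hx => rw [real_inner_smul_left, hx, mul_zero]
      have := hall (h i)
      rwa [real_inner_self_eq_norm_sq, pow_eq_zero_iff (two_ne_zero), norm_eq_zero] at this
    have : z i - β (ℓ i) = 0 := hbot
    simpa [sub_eq_zero] using this
  obtain ⟨i0, j0, hij0, hl0, hh0⟩ := hexists
  -- conclude
  have main : ∑ i : Fin m, ∑ j : Fin m, (‖β (ℓ i) - β (ℓ j)‖ + ⟪g i j, h i - h j⟫_ℝ)
      < ∑ i : Fin m, ∑ j : Fin m, ‖z i - z j‖ := by
    rw [← Finset.sum_product', ← Finset.sum_product']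
    apply Finset.sum_lt_sum
    · rintro ⟨i, j⟩ _
      exact key i j
    · refine ⟨(i0, j0), Finset.mem_univ _, ?_⟩
      exact keystrict i0 j0 hij0 hl0 hh0
  calc ∑ i : Fin m, ∑ j : Fin m, ‖β (ℓ i) - β (ℓ j)‖
      = ∑ i : Fin m, ∑ j : Fin m, (‖β (ℓ i) - β (ℓ j)‖ + ⟪g i j, h i - h j⟫_ℝ) := by
        simp only [Finset.sum_add_distrib, hzero, add_zero]
    _ < ∑ i : Fin m, ∑ j : Fin m, ‖z i - z j‖ := main
end

section
/- Fix $p$ and a finite set $S_p$ with $|S_p| = n_p$, a nonzero $v_p \in \mathbb{R}^d$, a positive constant $N = \sum_{q \neq p} n_q$, and vectors $a_i \in \mathbb{R}^d$ for $i \in S_p$ with $v_p^\top a_i \neq 0$. Define $\nu_i = \mathrm{sign}(v_p^\top a_i)\, N\, \|v_p\|_2 / \|P_{v_p} a_i\|_2$ and $\xi_{ij} = \frac{1}{n_p}(\nu_i P_{v_p^\perp} a_i - \nu_j P_{v_p^\perp} a_j)$. If the balance condition $\sum_{i \in S_p} \mathrm{sign}(v_p^\top a_i) \frac{P_{v_p^\perp}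 a_i}{\|P_{v_p} a_i\|_2} = 0$ holds, then for every $i \in S_p$: $\sum_{j \in S_p, j \neq i} \xi_{ij} + N v_p = \nu_i a_i$. -/
open scoped InnerProductSpace

theorem stmt_11 {d : ℕ} {ι : Type*} [DecidableEq ι] (S : Finset ι)
    (np : ℕ) (hnp : np = S.card)
    (N : ℝ) (hN : 0 < N)
    (v : EuclideanSpace ℝ (Fin d)) (hv : v ≠ 0)
    (a : ι → EuclideanSpace ℝ (Fin d)) (ha : ∀ i ∈ S, ⟪v, a i⟫_ℝ ≠ 0)
    (ν : ι → ℝ)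
    (hν : ∀ i ∈ S, ν i =
      Real.sign ⟪v, a i⟫_ℝ * N * ‖v‖ / ‖(⟪v, a i⟫_ℝ / ‖v‖ ^ 2) • v‖)
    (ξ : ι → ι → EuclideanSpace ℝ (Fin d))
    (hξ : ∀ i ∈ S, ∀ j ∈ S, ξ i j =
      (np : ℝ)⁻¹ • (ν i • (a i - (⟪v, a i⟫_ℝ / ‖v‖ ^ 2) • v)
        - ν j • (a j - (⟪v, a j⟫_ℝ / ‖v‖ ^ 2) • v)))
    (hbal : ∑ i ∈ S, Real.sign ⟪v, a i⟫_ℝ •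
      (‖(⟪v, a i⟫_ℝ / ‖v‖ ^ 2) • v‖⁻¹ • (a i - (⟪v, a i⟫_ℝ / ‖v‖ ^ 2) • v)) = 0) :
    ∀ i ∈ S, ∑ j ∈ S.erase i, ξ i j + N • v = ν i • a i := by
  intro i hi
  have hvn : ‖v‖ ≠ 0 := norm_ne_zero_iff.mpr hv
  set c : ι → ℝ := fun j => ⟪v, a j⟫_ℝ with hc
  set P : ι → EuclideanSpace ℝ (Fin d) := fun j => a j - (c j / ‖v‖ ^ 2) • v with hP
  have hnorm : ∀ j ∈ S, ‖(c j / ‖v‖ ^ 2) • v‖ = |c j| / ‖v‖ := by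
    intro j hj
    rw [norm_smul, Real.norm_eq_abs, abs_div, abs_pow, abs_norm]
    field_simp
  have hkey : ∀ j ∈ S, ν j * (c j / ‖v‖ ^ 2) = N := by
    intro j hj
    have hcj : c j ≠ 0 := ha j hj
    have habs : |c j| ≠ 0 := abs_ne_zero.mpr hcj
    have hs : Real.sign (c j) * c j = |c j| := by
      rcases hcj.lt_or_gt with h | h
      · rw [Real.sign_of_neg h, abs_of_neg h]; ring
      · rw [Real.sign_of_pos h, abs_of_pos h]; ring
    set s := Real.sign (c j) with hsg
    rw [hν j hj, hnorm j hj, ← hsg]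
    field_simp
    linear_combination hs
  have hsum0 : ∑ j ∈ S, ν j • P j = 0 := by
    have h := congrArg (fun x : EuclideanSpace ℝ (Fin d) => (N * ‖v‖) • x) hbal
    simp only [Finset.smul_sum, smul_zero] at h
    rw [← h]
    apply Finset.sum_congr rfl
    intro j hj
    rw [hν j hj, smul_smul, smul_smul]
    congr 1
    ring
  have hnp1 : (1:ℕ) ≤ S.card := Finset.card_pos.mpr ⟨i, hi⟩
  have hnpne : (np : ℝ) ≠ 0 := by
    have : np ≠ 0 := by omega
    exact_mod_cast this
  have hsum : ∑ j ∈ S.erase i, ξ i j = ν i • P i := by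
    have h1 : ∑ j ∈ S.erase i, ξ i j
        = ∑ j ∈ S.erase i, (np:ℝ)⁻¹ • (ν i • P i - ν j • P j) := by
      apply Finset.sum_congr rfl
      intro j hj
      exact hξ i hi j (Finset.mem_of_mem_erase hj)
    rw [h1, ← Finset.smul_sum, Finset.sum_sub_distrib, Finset.sum_const,
      Finset.sum_erase_eq_sub hi, hsum0, Finset.card_erase_of_mem hi,
      ← Nat.cast_smul_eq_nsmul ℝ, Nat.cast_sub hnp1, ← hnp]
    rw [smul_sub, smul_smul, smul_smul, zero_sub, smul_neg, smul_smul, sub_neg_eq_add,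
      ← add_smul]
    congr 1
    field_simp
    ring
  rw [hsum]
  have hai : ν i • a i = ν i • P i + (ν i * (c i / ‖v‖ ^ 2)) • v := by
    simp [hP, smul_sub, smul_smul]
  rw [hai, hkey i hi]
end

section
/- Fix distinct vectors $\beta_1,\dots,\beta_k \in \mathbb{R}^d$, a partition $S_1,\dots,S_k$ of $\{1,\dots,m\}$ with sizes $n_p = |S_p|$, vectors $a_i \in \mathbb{R}^d$ and scalars $b_i = a_i^\top \beta_{\ell_i}$ where $\ell_i$ is the class of $i$. Define $v_{pq} = (\beta_p - \beta_q)/\|\beta_p-\beta_q\|_2$ and $v_p = (\sum_{q\neq p} n_q)^{-1} \sum_{q\neq p} n_q v_{pq}$, and assume $v_p \neq 0$ and $v_p^\top a_i \neq 0$ for $i \in S_p$. Assume: (i) well-separation: $\max_p \max_{i\in S_p} \|P_{v_p^\perp} a_i\|_2/\|P_{v_p} a_i\|_2 < \frac{1}{2}\min_p n_p/m$; (ii) balance: $\sum_{i\in S_p} \mathrm{sign}(v_p^\top a_i) P_{v_p^\perp} a_i / \|P_{v_p} a_i\|_2 = 0$ for every $p$; (iii) spanning: $\mathrm{span}\{a_i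 : i \in S_p\} = \mathbb{R}^d$ for every $p$. Then the unique minimizer of $\sum_{i,j=1}^m \|z_i - z_j\|_2$ over all $(z_1,\dots,z_m) \in (\mathbb{R}^d)^m$ with $a_i^\top z_i = b_i$ is given by $z_i = \beta_{\ell_i}$ for all $i$. -/
open scoped InnerProductSpace

set_option maxHeartbeats 2000000 in
theorem stmt_13 {d k m : ℕ}
    (β : Fin k → EuclideanSpace ℝ (Fin d)) (hβ : Function.Injective β)
    (ℓ : Fin m → Fin k)
    (n : Fin k → ℕ) (hn : ∀ p, n p = (Finset.univ.filter fun i => ℓ i = p).card)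
    (a : Fin m → EuclideanSpace ℝ (Fin d)) (b : Fin m → ℝ)
    (hb : ∀ i, b i = ⟪a i, β (ℓ i)⟫_ℝ)
    (v : Fin k → EuclideanSpace ℝ (Fin d))
    (hv : ∀ p, v p = (∑ q ∈ Finset.univ.erase p, (n q : ℝ))⁻¹ •
      ∑ q ∈ Finset.univ.erase p, (n q : ℝ) • (‖β p - β q‖⁻¹ • (β p - β q)))
    (hvne : ∀ p, v p ≠ 0)
    (hva : ∀ i, ⟪v (ℓ i), a i⟫_ℝ ≠ 0)
    (hsep : ∀ i, ∀ p : Fin k,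
      ‖a i - (⟪v (ℓ i), a i⟫_ℝ / ‖v (ℓ i)‖ ^ 2) • v (ℓ i)‖ /
          ‖(⟪v (ℓ i), a i⟫_ℝ / ‖v (ℓ i)‖ ^ 2) • v (ℓ i)‖ <
        (1 / 2) * ((n p : ℝ) / m))
    (hbal : ∀ p : Fin k,
      ∑ i ∈ Finset.univ.filter fun i => ℓ i = p,
        Real.sign ⟪v p, a i⟫_ℝ •
          (‖(⟪v p, a i⟫_ℝ / ‖v p‖ ^ 2) • v p‖⁻¹ •
            (a i - (⟪v p, a i⟫_ℝ / ‖v p‖ ^ 2) • v p)) = 0)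
    (hspan : ∀ p : Fin k,
      Submodule.span ℝ {x | ∃ i, ℓ i = p ∧ a i = x} = ⊤) :
    ∀ z : Fin m → EuclideanSpace ℝ (Fin d),
      (∀ i, ⟪a i, z i⟫_ℝ = b i) → z ≠ (fun i => β (ℓ i)) →
        ∑ i : Fin m, ∑ j : Fin m, ‖β (ℓ i) - β (ℓ j)‖ <
          ∑ i : Fin m, ∑ j : Fin m, ‖z i - z j‖ := by
  classical
  intro z hz hne
  obtain ⟨i₀, hi₀⟩ : ∃ i, z i ≠ β (ℓ i) := by
    by_contra h; push_neg at h; exact hne (funext h)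
  have hmR : (0:ℝ) < m := by exact_mod_cast i₀.pos
  have hvpos : ∀ p, (0:ℝ) < ‖v p‖ := fun p => norm_pos_iff.mpr (hvne p)
  -- every class is nonempty
  have hnpos : ∀ p, (0:ℝ) < n p := by
    intro p
    have h1 : (0:ℝ) < (1/2) * ((n p : ℝ)/m) :=
      lt_of_le_of_lt (div_nonneg (norm_nonneg _) (norm_nonneg _)) (hsep i₀ p)
    have h2 : (0:ℝ) < (n p : ℝ)/m := by linarith
    by_contra h
    push_neg at h
    have h3 : (n p : ℝ) = 0 := le_antisymm h (Nat.cast_nonneg _)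
    rw [h3, zero_div] at h2; linarith
  have hsumn : ∑ p : Fin k, n p = m := by
    have h := Finset.card_eq_sum_card_fiberwise
      (f := ℓ) (s := (Finset.univ : Finset (Fin m))) (t := Finset.univ)
      (fun x _ => Finset.mem_univ _)
    simp only [hn]
    rw [← h, Finset.card_univ, Fintype.card_fin]
  set N : Fin k → ℝ := fun p => ∑ q ∈ Finset.univ.erase p, (n q : ℝ) with hN
  have hNval : ∀ p, N p = m - n p := by
    intro p
    have h1 := Finset.add_sum_erase Finset.univ (fun q => (n q:ℝ)) (Finset.mem_univ p)
    have h2 : ∑ q, (n q : ℝ) = m := by push_cast [← hsumn]; ring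
    simp only [hN]; rw [← h2]; linarith [h1]
  have hNpos : ∀ p, 0 < N p := by
    intro p
    rcases Finset.eq_empty_or_nonempty (Finset.univ.erase p) with he|he
    · exfalso; apply hvne p; rw [hv p, he]; simp
    · exact Finset.sum_pos (fun q _ => hnpos q) he
  have hvle : ∀ p, ‖v p‖ ≤ 1 := by
    intro p
    rw [hv p, norm_smul]
    have h1 : ‖∑ q ∈ Finset.univ.erase p, (n q : ℝ) • (‖β p - β q‖⁻¹ • (β p - β q))‖ ≤ N p := by
      refine le_trans (norm_sum_le _ _) ?_
      refine Finset.sum_le_sum fun q hq => ?_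
      have hne' : β p - β q ≠ 0 :=
        sub_ne_zero.mpr (fun hh => (Finset.ne_of_mem_erase hq) (hβ hh).symm)
      rw [norm_smul, norm_smul, norm_inv, norm_norm,
        inv_mul_cancel₀ (norm_ne_zero_iff.mpr hne'), mul_one, Real.norm_natCast]
    have h2 : ‖(∑ q ∈ Finset.univ.erase p, (n q : ℝ))⁻¹‖ = (N p)⁻¹ := by
      rw [Real.norm_eq_abs, abs_of_pos (inv_pos.mpr (hNpos p))]
    rw [h2]
    calc (N p)⁻¹ * ‖∑ q ∈ Finset.univ.erase p, (n q : ℝ) • (‖β p - β q‖⁻¹ • (β p - β q))‖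
        ≤ (N p)⁻¹ * N p :=
          mul_le_mul_of_nonneg_left h1 (le_of_lt (inv_pos.mpr (hNpos p)))
      _ = 1 := inv_mul_cancel₀ (ne_of_gt (hNpos p))
  have hvsum : ∀ p, ∑ q ∈ Finset.univ.erase p, (n q : ℝ) • (‖β p - β q‖⁻¹ • (β p - β q))
      = N p • v p := by
    intro p
    rw [hv p, smul_smul, mul_inv_cancel₀ (ne_of_gt (hNpos p)), one_smul]
  -- notation
  set c : Fin m → ℝ := fun i => ⟪v (ℓ i), a i⟫_ℝ with hc
  set r : Fin m → EuclideanSpace ℝ (Fin d) :=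
    fun i => a i - (c i / ‖v (ℓ i)‖ ^ 2) • v (ℓ i) with hr
  set lam : Fin m → ℝ := fun i => 2 * N (ℓ i) * ‖v (ℓ i)‖ ^ 2 / c i with hlam
  have hcne : ∀ i, c i ≠ 0 := hva
  have hPnorm : ∀ i, ‖(c i / ‖v (ℓ i)‖ ^ 2) • v (ℓ i)‖ = |c i| / ‖v (ℓ i)‖ := by
    intro i
    have hv0 : ‖v (ℓ i)‖ ≠ 0 := ne_of_gt (hvpos (ℓ i))
    rw [norm_smul, Real.norm_eq_abs, abs_div,
      abs_of_nonneg (by positivity : (0:ℝ) ≤ ‖v (ℓ i)‖^2)]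
    field_simp [hv0]
    try ring
  have hadecomp : ∀ i, a i = (c i / ‖v (ℓ i)‖ ^ 2) • v (ℓ i) + r i := by
    intro i; simp [hr]
  have hlam_a : ∀ i, lam i • a i = (2 * N (ℓ i)) • v (ℓ i) + lam i • r i := by
    intro i
    conv_lhs => rw [hadecomp i, smul_add]
    congr 1
    rw [smul_smul]
    simp only [hlam]
    congr 1
    have hv0 : ‖v (ℓ i)‖ ≠ 0 := ne_of_gt (hvpos (ℓ i))
    field_simp [hcne i, hv0]
    try ring
  -- balance condition in our terms
  have hbal' : ∀ p, ∑ i ∈ Finset.univ.filter fun i => ℓ i = p, lam i • r i = 0 := by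
    intro p
    have hsign : ∀ x : ℝ, Real.sign x * |x|⁻¹ = x⁻¹ := by
      intro x
      rcases lt_trichotomy x 0 with h|h|h
      · rw [Real.sign_of_neg h, abs_of_neg h]; field_simp
      · simp [h]
      · rw [Real.sign_of_pos h, abs_of_pos h]; ring
    have key := hbal p
    have hrw : ∀ i ∈ Finset.univ.filter fun i => ℓ i = p,
        Real.sign ⟪v p, a i⟫_ℝ •
          (‖(⟪v p, a i⟫_ℝ / ‖v p‖ ^ 2) • v p‖⁻¹ •
            (a i - (⟪v p, a i⟫_ℝ / ‖v p‖ ^ 2) • v p))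
          = ((c i)⁻¹ * ‖v p‖) • r i := by
      intro i hi
      have hℓ : ℓ i = p := (Finset.mem_filter.mp hi).2
      have hcv : ⟪v p, a i⟫_ℝ = c i := by simp only [hc]; rw [hℓ]
      rw [hcv, smul_smul]
      have h1 : ‖(c i / ‖v p‖ ^ 2) • v p‖ = |c i| / ‖v p‖ := by
        have := hPnorm i; rwa [hℓ] at this
      rw [h1]
      have hrr : a i - (c i / ‖v p‖ ^ 2) • v p = r i := by rw [hr]; simp [hℓ]
      rw [hrr]
      congr 1
      rw [div_eq_mul_inv, mul_inv, inv_inv, ← mul_assoc, hsign]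
    rw [Finset.sum_congr rfl hrw] at key
    have h2 : ∀ i ∈ Finset.univ.filter fun i => ℓ i = p,
        lam i • r i = (2 * N p * ‖v p‖) • (((c i)⁻¹ * ‖v p‖) • r i) := by
      intro i hi
      have hℓ : ℓ i = p := (Finset.mem_filter.mp hi).2
      rw [smul_smul]
      simp only [hlam]
      rw [hℓ]
      congr 1
      have hv0 : ‖v p‖ ≠ 0 := ne_of_gt (hvpos p)
      field_simp [hcne i, hv0]
      try ring
    rw [Finset.sum_congr rfl h2, ← Finset.smul_sum, key, smul_zero]
  -- sum of lam • a over a class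
  have hsumlam : ∀ p, ∑ i ∈ Finset.univ.filter fun i => ℓ i = p, lam i • a i
      = ((2:ℝ) * n p * N p) • v p := by
    intro p
    have h1 : ∀ i ∈ Finset.univ.filter fun i => ℓ i = p,
        lam i • a i = (2 * N p) • v p + lam i • r i := by
      intro i hi
      have hℓ : ℓ i = p := (Finset.mem_filter.mp hi).2
      have := hlam_a i; rwa [hℓ] at this
    rw [Finset.sum_congr rfl h1, Finset.sum_add_distrib, hbal' p, add_zero,
      Finset.sum_const, ← hn p]
    rw [← Nat.cast_smul_eq_nsmul ℝ, smul_smul]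
    congr 1
    ring
  -- the dual certificate
  set G : Fin m → Fin m → EuclideanSpace ℝ (Fin d) := fun i j =>
    if ℓ i = ℓ j then ((2 * (n (ℓ i)) : ℝ))⁻¹ • (lam i • a i - lam j • a j)
    else ‖β (ℓ i) - β (ℓ j)‖⁻¹ • (β (ℓ i) - β (ℓ j)) with hG
  have hGanti : ∀ i j, G i j = -G j i := by
    intro i j
    simp only [hG]
    by_cases h : ℓ i = ℓ j
    · rw [if_pos h, if_pos h.symm, h, ← smul_neg, neg_sub]
    · rw [if_neg h, if_neg (fun hh => h hh.symm), norm_sub_rev, ← smul_neg, neg_sub]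
  have hGrow : ∀ i, ∑ j, G i j = (lam i / 2) • a i := by
    intro i
    have hsplit := Finset.sum_filter_add_sum_filter_not Finset.univ
      (fun j => ℓ j = ℓ i) (fun j => G i j)
    rw [← hsplit]
    have h1 : ∑ j ∈ Finset.univ.filter (fun j => ℓ j = ℓ i), G i j
        = (lam i / 2) • a i - N (ℓ i) • v (ℓ i) := by
      have e1 : ∀ j ∈ Finset.univ.filter (fun j => ℓ j = ℓ i), G i j
          = ((2 * (n (ℓ i)) : ℝ))⁻¹ • (lam i • a i)
            - ((2 * (n (ℓ i)) : ℝ))⁻¹ • (lam j • a j) := by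
        intro j hj
        have hℓ : ℓ j = ℓ i := (Finset.mem_filter.mp hj).2
        simp only [hG]
        rw [if_pos hℓ.symm, smul_sub]
      rw [Finset.sum_congr rfl e1, Finset.sum_sub_distrib, Finset.sum_const,
        ← Finset.smul_sum]
      have hcard : (Finset.univ.filter (fun j => ℓ j = ℓ i)).card = n (ℓ i) := (hn (ℓ i)).symm
      rw [hcard, hsumlam (ℓ i), ← Nat.cast_smul_eq_nsmul ℝ]
      have hn0 : (n (ℓ i) : ℝ) ≠ 0 := ne_of_gt (hnpos (ℓ i))
      match_scalars <;> field_simp [hn0] <;> try ring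
    have h2 : ∑ j ∈ Finset.univ.filter (fun j => ¬ ℓ j = ℓ i), G i j
        = N (ℓ i) • v (ℓ i) := by
      have hmaps : ∀ x ∈ Finset.univ.filter (fun j => ¬ ℓ j = ℓ i),
          ℓ x ∈ Finset.univ.erase (ℓ i) := by
        intro x hx
        exact Finset.mem_erase.mpr ⟨(Finset.mem_filter.mp hx).2, Finset.mem_univ _⟩
      have hfib := Finset.sum_fiberwise_of_maps_to hmaps (fun j => G i j)
      rw [← hfib]
      have e2 : ∀ q ∈ Finset.univ.erase (ℓ i),
          (∑ x ∈ (Finset.univ.filter (fun j => ¬ ℓ j = ℓ i)).filter (fun j => ℓ j = q),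
            G i x)
          = (n q : ℝ) • (‖β (ℓ i) - β q‖⁻¹ • (β (ℓ i) - β q)) := by
        intro q hq
        have hqne : q ≠ ℓ i := (Finset.mem_erase.mp hq).1
        have hset : (Finset.univ.filter (fun j => ¬ ℓ j = ℓ i)).filter (fun j => ℓ j = q)
            = Finset.univ.filter (fun j => ℓ j = q) := by
          rw [Finset.filter_filter]
          apply Finset.filter_congr
          intro x _
          constructor
          · rintro ⟨_, h⟩; exact h
          · intro h; exact ⟨fun hh => hqne (h ▸ hh), h⟩
        rw [hset]
        have e3 : ∀ x ∈ Finset.univ.filter (fun j => ℓ j = q), G i x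
            = ‖β (ℓ i) - β q‖⁻¹ • (β (ℓ i) - β q) := by
          intro x hx
          have hℓx : ℓ x = q := (Finset.mem_filter.mp hx).2
          simp only [hG]
          rw [hℓx, if_neg (fun hh => hqne hh.symm)]
        rw [Finset.sum_congr rfl e3, Finset.sum_const, ← hn q, ← Nat.cast_smul_eq_nsmul ℝ]
      rw [Finset.sum_congr rfl e2, hvsum (ℓ i)]
    rw [h1, h2, sub_add_cancel]
  -- norm bound on the certificate
  have hkey : ∀ i, |lam i| * ‖r i‖ * m < N (ℓ i) * ‖v (ℓ i)‖ * n (ℓ i) := by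
    intro i
    have hv0 : (0:ℝ) < ‖v (ℓ i)‖ := hvpos (ℓ i)
    have hB : (0:ℝ) < |c i| := abs_pos.mpr (hcne i)
    have hs := hsep i (ℓ i)
    have er : a i - (⟪v (ℓ i), a i⟫_ℝ / ‖v (ℓ i)‖ ^ 2) • v (ℓ i) = r i := rfl
    have ec : ⟪v (ℓ i), a i⟫_ℝ = c i := rfl
    rw [er, ec, hPnorm i] at hs
    have hBv : (0:ℝ) < |c i| / ‖v (ℓ i)‖ := div_pos hB hv0
    rw [div_lt_iff₀ hBv] at hs
    have hlabs : |lam i| = 2 * N (ℓ i) * ‖v (ℓ i)‖ ^ 2 / |c i| := by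
      simp only [hlam]
      rw [abs_div, abs_of_pos (mul_pos (mul_pos two_pos (hNpos (ℓ i))) (pow_pos hv0 2))]
    rw [hlabs]
    calc 2 * N (ℓ i) * ‖v (ℓ i)‖ ^ 2 / |c i| * ‖r i‖ * m
        < 2 * N (ℓ i) * ‖v (ℓ i)‖ ^ 2 / |c i|
            * (1 / 2 * ((n (ℓ i) : ℝ) / m) * (|c i| / ‖v (ℓ i)‖)) * m := by
          apply mul_lt_mul_of_pos_right
            (mul_lt_mul_of_pos_left hs
              (div_pos (mul_pos (mul_pos two_pos (hNpos (ℓ i))) (pow_pos hv0 2)) hB)) hmR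
      _ = N (ℓ i) * ‖v (ℓ i)‖ * n (ℓ i) := by
          field_simp
  have hGlt : ∀ i j, ℓ i = ℓ j → ‖G i j‖ < 1 := by
    intro i j hij
    simp only [hG]
    rw [if_pos hij]
    have hdiff : lam i • a i - lam j • a j = lam i • r i - lam j • r j := by
      rw [hlam_a i, hlam_a j, hij]; abel
    have h2n : (0:ℝ) < 2 * (n (ℓ i) : ℝ) := mul_pos two_pos (hnpos (ℓ i))
    rw [hdiff, norm_smul, Real.norm_eq_abs, abs_of_pos (inv_pos.mpr h2n)]
    have h1 : ‖lam i • r i - lam j • r j‖ ≤ |lam i| * ‖r i‖ + |lam j| * ‖r j‖ := by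
      refine le_trans (norm_sub_le _ _) ?_
      rw [norm_smul, norm_smul, Real.norm_eq_abs, Real.norm_eq_abs]
    have hki := hkey i
    have hkj := hkey j
    rw [← hij] at hkj
    have hNV : N (ℓ i) * ‖v (ℓ i)‖ ≤ (m:ℝ) - n (ℓ i) := by
      have := mul_le_mul_of_nonneg_left (hvle (ℓ i)) (le_of_lt (hNpos (ℓ i)))
      rw [mul_one] at this
      linarith [hNval (ℓ i)]
    have hn0 : (0:ℝ) < (n (ℓ i) : ℝ) := hnpos (ℓ i)
    rw [inv_mul_lt_iff₀ h2n, mul_one]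
    calc ‖lam i • r i - lam j • r j‖ ≤ |lam i| * ‖r i‖ + |lam j| * ‖r j‖ := h1
      _ < 2 * (n (ℓ i) : ℝ) := by
          nlinarith [hki, hkj, hNV, hn0, hmR,
            mul_pos hn0 hn0, mul_pos hn0 hmR]
  -- feasibility differences
  set δ : Fin m → EuclideanSpace ℝ (Fin d) := fun i => z i - β (ℓ i) with hδ
  have hδinner : ∀ i, ⟪a i, δ i⟫_ℝ = 0 := by
    intro i
    simp only [hδ]
    rw [inner_sub_right, hz i, hb i, sub_self]
  have hδi₀ : δ i₀ ≠ 0 := by simp only [hδ]; exact sub_ne_zero.mpr hi₀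
  -- slack terms
  set T : Fin m → Fin m → ℝ := fun i j =>
    if ℓ i = ℓ j then (1 - ‖G i j‖) * ‖δ i - δ j‖ else 0 with hT
  have hTnn : ∀ i j, 0 ≤ T i j := by
    intro i j
    simp only [hT]
    by_cases h : ℓ i = ℓ j
    · rw [if_pos h]
      exact mul_nonneg (by linarith [hGlt i j h]) (norm_nonneg _)
    · rw [if_neg h]
  -- pointwise subgradient inequality
  have hpt : ∀ i j, ‖β (ℓ i) - β (ℓ j)‖ + (⟪G i j, δ i - δ j⟫_ℝ + T i j) ≤ ‖z i - z j‖ := by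
    intro i j
    by_cases h : ℓ i = ℓ j
    · have hββ : β (ℓ i) = β (ℓ j) := congrArg β h
      have hzz : z i - z j = δ i - δ j := by
        simp only [hδ]; rw [hββ]; abel
      rw [hzz, hββ, sub_self, norm_zero]
      simp only [hT]
      rw [if_pos h]
      have hin := real_inner_le_norm (G i j) (δ i - δ j)
      have hGn := hGlt i j h
      nlinarith [norm_nonneg (δ i - δ j)]
    · have hune : β (ℓ i) - β (ℓ j) ≠ 0 := sub_ne_zero.mpr (fun hh => h (hβ hh))
      have hun : (0:ℝ) < ‖β (ℓ i) - β (ℓ j)‖ := norm_pos_iff.mpr hune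
      have hGv : G i j = ‖β (ℓ i) - β (ℓ j)‖⁻¹ • (β (ℓ i) - β (ℓ j)) := by
        simp only [hG]; rw [if_neg h]
      have hzz : z i - z j = (β (ℓ i) - β (ℓ j)) + (δ i - δ j) := by
        simp only [hδ]; abel
      have hT0 : T i j = 0 := by simp only [hT]; rw [if_neg h]
      rw [hT0, add_zero]
      have e1 : ⟪G i j, z i - z j⟫_ℝ
          = ‖β (ℓ i) - β (ℓ j)‖ + ⟪G i j, δ i - δ j⟫_ℝ := by
        rw [hzz, inner_add_right]
        congr 1
        rw [hGv, real_inner_smul_left, real_inner_self_eq_norm_mul_norm]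
        field_simp
      have e2 : ‖G i j‖ = 1 := by
        rw [hGv, norm_smul, norm_inv, norm_norm, inv_mul_cancel₀ (ne_of_gt hun)]
      calc ‖β (ℓ i) - β (ℓ j)‖ + ⟪G i j, δ i - δ j⟫_ℝ = ⟪G i j, z i - z j⟫_ℝ := e1.symm
        _ ≤ ‖G i j‖ * ‖z i - z j‖ := real_inner_le_norm _ _
        _ = ‖z i - z j‖ := by rw [e2, one_mul]
  -- the inner product terms sum to zero
  have hA : ∀ i, ∑ j, ⟪G i j, δ i⟫_ℝ = 0 := by
    intro i
    rw [← sum_inner, hGrow i, real_inner_smul_left, hδinner i, mul_zero]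
  have hB0 : ∀ j, ∑ i, ⟪G i j, δ j⟫_ℝ = 0 := by
    intro j
    rw [← sum_inner]
    have e : ∑ i, G i j = -((lam j / 2) • a j) := by
      rw [Finset.sum_congr rfl (fun i _ => hGanti i j), Finset.sum_neg_distrib, hGrow j]
    rw [e, inner_neg_left, real_inner_smul_left, hδinner j, mul_zero, neg_zero]
  have hinner0 : ∑ i : Fin m, ∑ j : Fin m, ⟪G i j, δ i - δ j⟫_ℝ = 0 := by
    have e : ∀ i j, ⟪G i j, δ i - δ j⟫_ℝ = ⟪G i j, δ i⟫_ℝ - ⟪G i j, δ j⟫_ℝ := by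
      intro i j; rw [inner_sub_right]
    simp only [e, Finset.sum_sub_distrib]
    rw [Finset.sum_comm (f := fun i j => ⟪G i j, δ j⟫_ℝ)]
    simp only [hA, hB0]
    simp
  -- the slack sum is positive
  obtain ⟨j₀, hj₀ℓ, hj₀⟩ : ∃ j, ℓ j = ℓ i₀ ∧ ⟪a j, δ i₀⟫_ℝ ≠ 0 := by
    by_contra hcon
    push_neg at hcon
    have hmem : δ i₀ ∈ Submodule.span ℝ {x | ∃ i, ℓ i = ℓ i₀ ∧ a i = x} := by
      rw [hspan (ℓ i₀)]; trivial
    have h0 : ⟪δ i₀, δ i₀⟫_ℝ = 0 := by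
      refine Submodule.span_induction (p := fun x _ => ⟪x, δ i₀⟫_ℝ = 0) ?_ ?_ ?_ ?_ hmem
      · rintro x ⟨i, hi, rfl⟩
        exact hcon i hi
      · simp
      · intro x y _ _ px py
        rw [inner_add_left, px, py, add_zero]
      · intro t x _ px
        rw [real_inner_smul_left, px, mul_zero]
    exact hδi₀ (inner_self_eq_zero.mp h0)
  have hδne : δ i₀ ≠ δ j₀ := by
    intro hh
    apply hj₀
    rw [hh]
    exact hδinner j₀
  have hTij : 0 < T i₀ j₀ := by
    simp only [hT]
    rw [if_pos hj₀ℓ.symm]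
    exact mul_pos (by linarith [hGlt i₀ j₀ hj₀ℓ.symm])
      (norm_pos_iff.mpr (sub_ne_zero.mpr hδne))
  have hTpos : 0 < ∑ i : Fin m, ∑ j : Fin m, T i j := by
    refine Finset.sum_pos' (fun i _ => Finset.sum_nonneg fun j _ => hTnn i j) ?_
    exact ⟨i₀, Finset.mem_univ _,
      Finset.sum_pos' (fun j _ => hTnn i₀ j) ⟨j₀, Finset.mem_univ _, hTij⟩⟩
  -- assemble
  have hS1 : ∑ i : Fin m, ∑ j : Fin m,
      (‖β (ℓ i) - β (ℓ j)‖ + (⟪G i j, δ i - δ j⟫_ℝ + T i j))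
      ≤ ∑ i : Fin m, ∑ j : Fin m, ‖z i - z j‖ :=
    Finset.sum_le_sum fun i _ => Finset.sum_le_sum fun j _ => hpt i j
  have hS2 : ∑ i : Fin m, ∑ j : Fin m,
      (‖β (ℓ i) - β (ℓ j)‖ + (⟪G i j, δ i - δ j⟫_ℝ + T i j))
      = (∑ i : Fin m, ∑ j : Fin m, ‖β (ℓ i) - β (ℓ j)‖)
        + ((∑ i : Fin m, ∑ j : Fin m, ⟪G i j, δ i - δ j⟫_ℝ)
          + ∑ i : Fin m, ∑ j : Fin m, T i j) := by
    simp [Finset.sum_add_distrib]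
  rw [hS2, hinner0, zero_add] at hS1
  linarith
end
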